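/- Let l be a list of simple coins with probabilities in [0,1] and nonnegative fees, and let E be a real penalty. Then the minimum of COST(s, E) over all (order-preserving) sublists s of l equals foldr (fun c a => min a (μ_c + (1−P_c)·a)) E l. (This is the backwards-induction characterization of the optimal strategy when the coins must be considered in a given order and each coin may be tossed or skipped.) -/

import Mathlib

/-- Expected cost of tossing a list of simple coins `(P, μ)` in order,
paying the penalty `E` if all tosses fail. -/
noncomputable def listCost (l : List (ℝ × ℝ)) (E : ℝ) : ℝ :=
  l.foldr (fun c a => c.2 + (1 - c.1) * a) E

/-- Backwards-induction characterization of the optimal strategy when the coins must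
be considered in a given order and each may be tossed or skipped: the minimum of
`COST(s, E)` over all order-preserving sublists `s` of `l` equals
`foldr (fun c a => min a (μ_c + (1 - P_c) · a)) E l`. -/
theorem backwards_induction_optimal
    (E : ℝ) (l : List (ℝ × ℝ))
    (hcoin : ∀ c ∈ l, 0 ≤ c.1 ∧ c.1 ≤ 1 ∧ 0 ≤ c.2) :
    IsLeast {x : ℝ | ∃ s : List (ℝ × ℝ), s.Sublist l ∧ listCost s E = x}
      (l.foldr (fun c a => min a (c.2 + (1 - c.1) * a)) E) := by
  induction l with
  | nil =>
    constructor
    · exact ⟨[], List.Sublist.refl _, rfl⟩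
    · rintro x ⟨s, hs, rfl⟩
      simp [List.sublist_nil.mp hs, listCost]
  | cons c t ih =>
    obtain ⟨⟨s, hs, hcost⟩, hlb⟩ := ih (fun d hd => hcoin d (List.mem_cons_of_mem _ hd))
    set g := t.foldr (fun c a => min a (c.2 + (1 - c.1) * a)) E with hg
    obtain ⟨hP0, hP1, hμ⟩ := hcoin c List.mem_cons_self
    constructor
    · rcases le_total g (c.2 + (1 - c.1) * g) with h | h
      · exact ⟨s, hs.cons _, by rw [hcost, List.foldr_cons, ← hg, min_eq_left h]⟩
      · refine ⟨c :: s, hs.cons₂ _, ?_⟩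
        simp only [listCost] at hcost ⊢
        rw [List.foldr_cons, hcost, List.foldr_cons, ← hg, min_eq_right h]
    · rintro x ⟨s', hs', rfl⟩
      rcases List.sublist_cons_iff.mp hs' with h | ⟨r, rfl, hr⟩
      · exact le_trans (min_le_left _ _) (hlb ⟨s', h, rfl⟩)
      · refine le_trans (min_le_right _ _) ?_
        have : g ≤ listCost r E := hlb ⟨r, hr, rfl⟩
        simp only [listCost] at this
        simp only [listCost, List.foldr_cons]
        have h1P : 0 ≤ 1 - c.1 := by linarith
        nlinarith [mul_le_mul_of_nonneg_left this h1P]
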